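/- Let ξ ∈ ℝ³ be nonzero and let w₁, …, w_{m+1} be vectors in the plane ξ^⊥ any two of which are linearly independent. For 0 ≤ p ≤ m, let U_p be the set of symmetric tensors { w_k^{⊙p} ⊙ ξ^{⊙(m-p)} : 1 ≤ k ≤ m+1 } in Sym^m(ℝ³). Then the span of U_p has dimension exactly p+1. -/

import Mathlib

def dot3 (u v : Fin 3 → ℝ) : ℝ := ∑ i, u i * v i

/-- The symmetric tensor w^{⊙p} ⊙ ξ^{⊙(m-p)} in Sym^m(ℝ³), modeled faithfully as
the polynomial function y ↦ ⟨w,y⟩^p ⟨ξ,y⟩^{m-p}. -/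
noncomputable def symMix (m p : ℕ) (w ξ : Fin 3 → ℝ) : (Fin 3 → ℝ) → ℝ :=
  fun y => (dot3 w y) ^ p * (dot3 ξ y) ^ (m - p)

/-- For ξ ≠ 0 and w₁,…,w_{m+1} ∈ ξ^⊥ pairwise linearly independent, the span of
U_p = { w_k^{⊙p} ⊙ ξ^{⊙(m-p)} : 1 ≤ k ≤ m+1 } has dimension exactly p+1. -/
lemma dot3_comm (u v : Fin 3 → ℝ) : dot3 u v = dot3 v u := by
  simp [dot3, mul_comm]

lemma dot3_add_right (u v v' : Fin 3 → ℝ) : dot3 u (v + v') = dot3 u v + dot3 u v' := by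
  simp [dot3, mul_add, Finset.sum_add_distrib]

lemma dot3_sub_right (u v v' : Fin 3 → ℝ) : dot3 u (v - v') = dot3 u v - dot3 u v' := by
  simp [dot3, mul_sub, Finset.sum_sub_distrib]

lemma dot3_smul_right (u : Fin 3 → ℝ) (c : ℝ) (v : Fin 3 → ℝ) :
    dot3 u (c • v) = c * dot3 u v := by
  simp only [dot3, Pi.smul_apply, smul_eq_mul, Finset.mul_sum]
  exact Finset.sum_congr rfl fun i _ => by ring

lemma dot3_self_ne_zero {x : Fin 3 → ℝ} (hx : x ≠ 0) : dot3 x x ≠ 0 := by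
  have h : ∀ i ∈ Finset.univ, (0:ℝ) ≤ x i * x i := fun i _ => mul_self_nonneg _
  intro h0
  apply hx
  funext i
  have := (Finset.sum_eq_zero_iff_of_nonneg h).mp h0 i (Finset.mem_univ i)
  have : x i = 0 := by nlinarith
  simpa using this

/-- dot3 with `ξ` on the right, as a linear map in the first argument. -/
noncomputable def dotL (ξ : Fin 3 → ℝ) : (Fin 3 → ℝ) →ₗ[ℝ] ℝ where
  toFun x := dot3 x ξ
  map_add' x y := by
    show dot3 (x+y) ξ = dot3 x ξ + dot3 y ξ
    rw [dot3_comm, dot3_add_right, dot3_comm ξ x, dot3_comm ξ y]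
  map_smul' c x := by
    show dot3 (c • x) ξ = c • dot3 x ξ
    rw [dot3_comm, dot3_smul_right, dot3_comm ξ x]; rfl

lemma dotL_apply (ξ x : Fin 3 → ℝ) : dotL ξ x = dot3 x ξ := rfl

open Polynomial in
lemma key_lin (p : ℕ) (a b : Fin (p+1) → ℝ) (hb : ∀ k, b k ≠ 0)
    (hdist : Function.Injective (fun k => a k / b k))
    (c : Fin (p+1) → ℝ) (h : ∀ t : ℝ, ∑ k, c k * (a k + t * b k)^p = 0) :
    ∀ k, c k = 0 := by
  classical
  set u : Fin (p+1) → ℝ := fun k => a k / b k with hu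
  set d : Fin (p+1) → ℝ := fun k => c k * b k ^ p with hd
  have h' : ∀ t : ℝ, ∑ k, d k * (t + u k)^p = 0 := by
    intro t
    rw [← h t]
    refine Finset.sum_congr rfl fun k _ => ?_
    have : a k + t * b k = b k * (t + u k) := by
      simp only [hu]
      rw [mul_add, mul_comm (b k) (a k / b k), div_mul_cancel₀ _ (hb k)]
      ring
    rw [this, mul_pow, hd]
    ring
  set Q : ℝ[X] := ∑ k, C (d k) * (X + C (u k))^p with hQ
  have hQ0 : Q = 0 := by
    apply Polynomial.funext
    intro t
    simp only [hQ, eval_finset_sum, eval_mul, eval_pow, eval_add, eval_C, eval_X, eval_zero]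
    exact h' t
  have hcoeff : ∀ i : ℕ, i ≤ p → ∑ k, d k * u k ^ i = 0 := by
    intro i hi
    have h1 : Q.coeff (p - i) = 0 := by rw [hQ0]; simp
    rw [hQ, finset_sum_coeff] at h1
    simp only [coeff_C_mul, coeff_X_add_C_pow] at h1
    have h2 : ∀ k : Fin (p+1), d k * (u k ^ (p - (p - i)) * (p.choose (p-i) : ℝ))
        = (d k * u k ^ i) * (p.choose (p-i) : ℝ) := by
      intro k
      rw [Nat.sub_sub_self hi]
      ring
    rw [Finset.sum_congr rfl (fun k _ => h2 k), ← Finset.sum_mul] at h1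
    have hch : (p.choose (p-i) : ℝ) ≠ 0 :=
      Nat.cast_ne_zero.mpr (Nat.choose_pos (Nat.sub_le p i)).ne'
    exact (mul_eq_zero.mp h1).resolve_right hch
  have hM : (Matrix.vandermonde u).transpose.det ≠ 0 := by
    rw [Matrix.det_transpose]
    exact Matrix.det_vandermonde_ne_zero_iff.mpr hdist
  have hmv : (Matrix.vandermonde u).transpose.mulVec d = 0 := by
    funext i
    simp only [Matrix.mulVec, dotProduct, Matrix.transpose_apply, Matrix.vandermonde_apply,
      Pi.zero_apply]
    rw [← hcoeff i (Nat.lt_succ_iff.mp i.isLt)]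
    exact Finset.sum_congr rfl fun k _ => by ring
  have hd0 : d = 0 := Matrix.eq_zero_of_mulVec_eq_zero hM hmv
  intro k
  have := congrFun hd0 k
  simp only [hd, Pi.zero_apply] at this
  exact (mul_eq_zero.mp this).resolve_right (pow_ne_zero _ (hb k))

lemma span_pair_eq_ker (ξ : Fin 3 → ℝ) (hξ : ξ ≠ 0) (w0 w1 : Fin 3 → ℝ)
    (h0 : dot3 w0 ξ = 0) (h1 : dot3 w1 ξ = 0) (hli : LinearIndependent ℝ ![w0, w1]) :
    Submodule.span ℝ {w0, w1} = LinearMap.ker (dotL ξ) := by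
  have hle : Submodule.span ℝ {w0, w1} ≤ LinearMap.ker (dotL ξ) := by
    rw [Submodule.span_le]
    rintro x (rfl | rfl) <;> simp [LinearMap.mem_ker, dotL_apply, h0, h1]
  have hr2 : Module.finrank ℝ (Submodule.span ℝ {w0, w1}) = 2 := by
    have hrange : Set.range ![w0, w1] = {w0, w1} := by
      ext x
      simp [Fin.exists_fin_two]
      tauto
    have := finrank_span_eq_card hli
    rw [hrange] at this
    simpa using this
  have hfin : Module.finrank ℝ (LinearMap.ker (dotL ξ)) = 2 := by
    have hle3 : Module.finrank ℝ (LinearMap.ker (dotL ξ)) ≤ 3 := by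
      have := Submodule.finrank_le (LinearMap.ker (dotL ξ))
      simpa [Module.finrank_fin_fun] using this
    have hne : Module.finrank ℝ (LinearMap.ker (dotL ξ)) ≠ 3 := by
      intro h3
      have htop : LinearMap.ker (dotL ξ) = ⊤ :=
        Submodule.eq_top_of_finrank_eq (by simpa [Module.finrank_fin_fun] using h3)
      have : ξ ∈ LinearMap.ker (dotL ξ) := htop ▸ Submodule.mem_top
      rw [LinearMap.mem_ker, dotL_apply] at this
      exact dot3_self_ne_zero hξ this
    have hge : 2 ≤ Module.finrank ℝ (LinearMap.ker (dotL ξ)) := by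
      calc 2 = Module.finrank ℝ (Submodule.span ℝ {w0, w1}) := hr2.symm
        _ ≤ _ := Submodule.finrank_mono hle
    omega
  exact Submodule.eq_of_le_of_finrank_eq hle (by rw [hr2, hfin])

theorem span_symMix_dim (m : ℕ) (ξ : Fin 3 → ℝ) (hξ : ξ ≠ 0)
    (w : Fin (m + 1) → Fin 3 → ℝ)
    (hperp : ∀ k, dot3 (w k) ξ = 0)
    (hpair : ∀ i j, i ≠ j → LinearIndependent ℝ ![w i, w j])
    (p : ℕ) (hp : p ≤ m) :
    Module.finrank ℝ
      ↥(Submodule.span ℝ (Set.range fun k : Fin (m + 1) => symMix m p (w k) ξ)) = p + 1 := by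
  classical
  rcases Nat.eq_zero_or_pos m with hm | hm
  · -- degenerate case m = 0, p = 0
    subst hm
    have hp0 : p = 0 := Nat.le_zero.mp hp
    subst hp0
    have hone : (Set.range fun k : Fin 1 => symMix 0 0 (w k) ξ) = {fun _ => (1:ℝ)} := by
      ext x
      constructor
      · rintro ⟨k, rfl⟩
        funext y
        simp [symMix]
      · rintro rfl
        exact ⟨0, by funext y; simp [symMix]⟩
    rw [hone]
    have : (fun _ : Fin 3 → ℝ => (1:ℝ)) ≠ 0 := by
      intro h
      have := congrFun h 0
      simp at this
    exact finrank_span_singleton this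
  · -- main case m ≥ 1
    set f : Fin (m+1) → ((Fin 3 → ℝ) → ℝ) := fun k => symMix m p (w k) ξ with hf
    have h01 : (0 : Fin (m+1)) ≠ 1 := by
      apply Fin.ne_of_val_ne
      rw [Fin.val_zero, Fin.val_one']
      simp [Nat.mod_eq_of_lt (by omega : 1 < m + 1)]
    have hker := span_pair_eq_ker ξ hξ (w 0) (w 1) (hperp 0) (hperp 1) (hpair 0 1 h01)
    have hmem : ∀ k, w k ∈ Submodule.span ℝ {w 0, w 1} := by
      intro k
      rw [hker, LinearMap.mem_ker, dotL_apply]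
      exact hperp k
    have hcoord : ∀ k, ∃ α β : ℝ, α • w 0 + β • w 1 = w k :=
      fun k => Submodule.mem_span_pair.mp (hmem k)
    have hwne : ∀ k, w k ≠ 0 := by
      intro k hk
      set j : Fin (m+1) := if k = 0 then 1 else 0 with hj
      have hkj : k ≠ j := by
        by_cases h : k = 0 <;> simp [hj, h, h01, Ne.symm h01]
      have := (LinearIndependent.pair_iff.mp (hpair k j hkj)) 1 0 (by simp [hk])
      exact one_ne_zero this.1
    have hnb : ∀ k, ¬(dot3 (w k) (w 0) = 0 ∧ dot3 (w k) (w 1) = 0) := by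
      rintro k ⟨hA, hB⟩
      obtain ⟨α, β, hk⟩ := hcoord k
      have : dot3 (w k) (w k) = 0 := by
        calc dot3 (w k) (w k) = dot3 (w k) (α • w 0 + β • w 1) := by rw [hk]
          _ = 0 := by rw [dot3_add_right, dot3_smul_right, dot3_smul_right, hA, hB]; ring
      exact dot3_self_ne_zero (hwne k) this
    obtain ⟨s, hs⟩ := Infinite.exists_notMem_finset
      (Finset.image (fun k => -(dot3 (w k) (w 0)) / (dot3 (w k) (w 1))) Finset.univ)
    set dvec : Fin 3 → ℝ := w 0 + s • w 1 with hdvec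
    have hbexp : ∀ k, dot3 (w k) dvec = dot3 (w k) (w 0) + s * dot3 (w k) (w 1) := by
      intro k
      rw [hdvec, dot3_add_right, dot3_smul_right]
    have hb : ∀ k, dot3 (w k) dvec ≠ 0 := by
      intro k hzero
      rw [hbexp k] at hzero
      by_cases h1 : dot3 (w k) (w 1) = 0
      · exact hnb k ⟨by rw [h1] at hzero; linarith, h1⟩
      · apply hs
        rw [Finset.mem_image]
        refine ⟨k, Finset.mem_univ k, ?_⟩
        field_simp
        linarith
    have hdet : ∀ k l, k ≠ l →
        dot3 (w k) (w 1) * dot3 (w l) dvec ≠ dot3 (w l) (w 1) * dot3 (w k) dvec := by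
      intro k l hkl heq
      set z : Fin 3 → ℝ := dot3 (w l) dvec • w k - dot3 (w k) dvec • w l with hz
      have hz1 : dot3 (w 1) z = 0 := by
        rw [hz, dot3_sub_right, dot3_smul_right, dot3_smul_right,
          dot3_comm (w 1) (w k), dot3_comm (w 1) (w l)]
        nlinarith [heq]
      have hzd : dot3 dvec z = 0 := by
        rw [hz, dot3_sub_right, dot3_smul_right, dot3_smul_right,
          dot3_comm dvec (w k), dot3_comm dvec (w l)]
        ring
      have hzmem : z ∈ Submodule.span ℝ {w 0, w 1} := by
        rw [hz]
        exact Submodule.sub_mem _ (Submodule.smul_mem _ _ (hmem k))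
          (Submodule.smul_mem _ _ (hmem l))
      obtain ⟨α, β, hzeq⟩ := Submodule.mem_span_pair.mp hzmem
      have hz0' : dot3 (w 0) z = 0 := by
        have : dot3 (w 0) z = dot3 dvec z - s * dot3 (w 1) z := by
          rw [hdvec, dot3_comm dvec z, dot3_add_right, dot3_smul_right,
            dot3_comm z (w 0), dot3_comm z (w 1), dot3_comm (w 1) z]
          ring
        rw [this, hzd, hz1]
        ring
      have hzz : dot3 z z = 0 := by
        calc dot3 z z = dot3 z (α • w 0 + β • w 1) := by rw [hzeq]
          _ = 0 := by
              rw [dot3_add_right, dot3_smul_right, dot3_smul_right,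
                dot3_comm z (w 0), dot3_comm z (w 1), hz0', hz1]
              ring
      have hz0 : z = 0 := by
        by_contra h
        exact dot3_self_ne_zero h hzz
      have hcomb : dot3 (w l) dvec • w k + (-(dot3 (w k) dvec)) • w l = 0 := by
        rw [neg_smul, ← sub_eq_add_neg, ← hz, hz0]
      have := (LinearIndependent.pair_iff.mp (hpair k l hkl)) _ _ hcomb
      exact hb l this.1
    have hN : dot3 ξ ξ ≠ 0 := dot3_self_ne_zero hξ
    set emb : Fin (p+1) → Fin (m+1) := Fin.castLE (by omega) with hemb
    have hembinj : Function.Injective emb := Fin.castLE_injective _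
    -- lower bound: linear independence
    have hLI : LinearIndependent ℝ (fun k : Fin (p+1) => f (emb k)) := by
      rw [Fintype.linearIndependent_iff]
      intro c hc
      set a' : Fin (p+1) → ℝ := fun k => dot3 (w (emb k)) (w 1) with ha'
      set b' : Fin (p+1) → ℝ := fun k => dot3 (w (emb k)) dvec with hb'
      have hb'ne : ∀ k, b' k ≠ 0 := fun k => hb (emb k)
      have hdist : Function.Injective (fun k => a' k / b' k) := by
        intro k l h
        by_contra hne
        have hkl : emb k ≠ emb l := fun he => hne (hembinj he)
        have := (div_eq_div_iff (hb'ne k) (hb'ne l)).mp h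
        exact hdet (emb k) (emb l) hkl (by rw [ha', hb'] at this; linarith)
      have hsum : ∀ t : ℝ, ∑ k, c k * (a' k + t * b' k)^p = 0 := by
        intro t
        have hy := congrFun hc (ξ + w 1 + t • dvec)
        simp only [Finset.sum_apply, Pi.smul_apply, smul_eq_mul, Pi.zero_apply, hf, symMix] at hy
        have hwy : ∀ j : Fin (m+1), dot3 (w j) (ξ + w 1 + t • dvec)
            = dot3 (w j) (w 1) + t * dot3 (w j) dvec := by
          intro j
          rw [dot3_add_right, dot3_add_right, dot3_smul_right, hperp j]
          ring
        have hxy : dot3 ξ (ξ + w 1 + t • dvec) = dot3 ξ ξ := by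
          rw [dot3_add_right, dot3_add_right, dot3_smul_right, dot3_comm ξ (w 1), hperp 1,
            hdvec, dot3_add_right, dot3_smul_right, dot3_comm ξ (w 0), dot3_comm ξ (w 1),
            hperp 0, hperp 1]
          ring
        rw [hxy] at hy
        have hy2 : (∑ k, c k * (a' k + t * b' k)^p) * (dot3 ξ ξ)^(m-p) = 0 := by
          rw [Finset.sum_mul, ← hy]
          refine Finset.sum_congr rfl fun k _ => ?_
          rw [hwy (emb k), ha', hb']
          ring
        exact (mul_eq_zero.mp hy2).resolve_right (pow_ne_zero _ hN)
      exact key_lin p a' b' hb'ne hdist c hsum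
    -- upper bound: spanning family
    set g : Fin (p+1) → ((Fin 3 → ℝ) → ℝ) :=
      fun i y => (dot3 (w 0) y)^(i:ℕ) * ((dot3 (w 1) y)^(p-(i:ℕ)) * (dot3 ξ y)^(m-p)) with hg
    have hfg : ∀ k, f k ∈ Submodule.span ℝ (Set.range g) := by
      intro k
      obtain ⟨α, β, hk⟩ := hcoord k
      have hfk : f k = ∑ i : Fin (p+1),
          (α^(i:ℕ) * β^(p-(i:ℕ)) * (p.choose (i:ℕ) : ℝ)) • g i := by
        funext y
        simp only [hf, symMix, Finset.sum_apply, Pi.smul_apply, smul_eq_mul, hg]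
        have hdw : dot3 (w k) y = α * dot3 (w 0) y + β * dot3 (w 1) y := by
          rw [← hk, dot3_comm, dot3_add_right, dot3_smul_right, dot3_smul_right,
            dot3_comm y (w 0), dot3_comm y (w 1)]
        rw [hdw, add_pow, Finset.sum_mul, ← Fin.sum_univ_eq_sum_range]
        refine Finset.sum_congr rfl fun i _ => ?_
        rw [mul_pow, mul_pow]
        ring
      rw [hfk]
      exact Submodule.sum_mem _ fun i _ =>
        Submodule.smul_mem _ _ (Submodule.subset_span ⟨i, rfl⟩)
    have hVle : Submodule.span ℝ (Set.range f) ≤ Submodule.span ℝ (Set.range g) := by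
      rw [Submodule.span_le]
      rintro _ ⟨k, rfl⟩
      exact hfg k
    haveI : FiniteDimensional ℝ (Submodule.span ℝ (Set.range g)) :=
      FiniteDimensional.span_of_finite ℝ (Set.finite_range g)
    haveI : FiniteDimensional ℝ (Submodule.span ℝ (Set.range f)) :=
      FiniteDimensional.span_of_finite ℝ (Set.finite_range f)
    have hup : Module.finrank ℝ (Submodule.span ℝ (Set.range f)) ≤ p + 1 := by
      calc Module.finrank ℝ (Submodule.span ℝ (Set.range f))
          ≤ Module.finrank ℝ (Submodule.span ℝ (Set.range g)) := Submodule.finrank_mono hVle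
        _ ≤ (Set.range g).toFinset.card := finrank_span_le_card (Set.range g)
        _ ≤ p + 1 := by
            rw [Set.toFinset_range]
            exact le_trans (Finset.card_image_le) (by simp)
    have hlow : p + 1 ≤ Module.finrank ℝ (Submodule.span ℝ (Set.range f)) := by
      have h1 : Module.finrank ℝ
          (Submodule.span ℝ (Set.range (fun k : Fin (p+1) => f (emb k)))) = p + 1 := by
        rw [finrank_span_eq_card hLI]
        simp
      have hle : Submodule.span ℝ (Set.range (fun k : Fin (p+1) => f (emb k)))
          ≤ Submodule.span ℝ (Set.range f) := by
        apply Submodule.span_mono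
        rintro _ ⟨k, rfl⟩
        exact ⟨emb k, rfl⟩
      rw [← h1]
      exact Submodule.finrank_mono hle
    exact le_antisymm hup hlow
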